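/- (Model-mismatch bound with arbitrary initial conditions.) In the setting of Lemma 5 (block lower triangular Φ = [Φ_x; Φ_u] satisfying the nominal SLS constraint, model error Δℳ, R_Φ = (I + ΦZΔℳ)⁻¹, data (x^i, u^i) with w^i, ŵ^i, and shift vectors x̃₀^i defined as there), the following hold: (a) for each i, Φ(ŵ^i + x̃₀^i) − R_Φ Φ (w^i + x̃₀^i) = R_Φ Φ Z Δℳ (Φ(ŵ^i + x̃₀^i) − [x^i; u^i]); and (b) consequently, the Wasserstein distance between the empirical predictive distribution P̂_pred = (1/N)Σ_i δ_{Φ(ŵ^i + x̃₀^i)} and the empirical closed-loop distribution P̄_cl = (1/N)Σ_i δ_{R_ΦΦ(w^i + x̃₀^i)} satisfies d_W(P̂_pred, P̄_cl) ≤ (1/N)Σ_{i=1}^N ‖R_Φ Φ Z Δℳ (Φ(ŵ^i + x̃₀^i) − [x^i; u^i])‖. -/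

import Mathlib

open MeasureTheory Matrix
open scoped ENNReal

/-- The ℓ¹-norm of a vector. -/
noncomputable def l1norm {ι : Type*} [Fintype ι] (v : ι → ℝ) : ℝ := ∑ i, |v i|

/-- The induced ℓ¹-norm of a matrix (maximum absolute column sum). -/
noncomputable def matL1 {ι κ : Type*} [Fintype ι] [Fintype κ] (M : Matrix ι κ ℝ) : ℝ :=
  ⨆ j, ∑ i, |M i j|

/-- The Wasserstein-1 distance (w.r.t. the ℓ¹-norm): infimum over couplings of the expected
ℓ¹-distance. -/
noncomputable def wass {ι : Type*} [Fintype ι] (P Q : Measure (ι → ℝ)) : ℝ :=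
  sInf { r | ∃ π : Measure ((ι → ℝ) × (ι → ℝ)),
    IsProbabilityMeasure π ∧ π.map Prod.fst = P ∧ π.map Prod.snd = Q ∧
    r = ∫ p, l1norm (p.1 - p.2) ∂π }

/-- The uniform empirical measure `(1/N) ∑ᵢ δ_{a i}`. -/
noncomputable def emp {ι : Type*} [Fintype ι] {N : ℕ} (a : Fin N → (ι → ℝ)) :
    Measure (ι → ℝ) :=
  (N : ℝ≥0∞)⁻¹ • ∑ i, Measure.dirac (a i)

/-- The block-downshift matrix `Z`, with `n × n` identity blocks on the first block
subdiagonal and zero blocks elsewhere. -/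
noncomputable def dshift (T n : ℕ) : Matrix (Fin (T+1) × Fin n) (Fin (T+1) × Fin n) ℝ :=
  fun p q => if (p.1 : ℕ) = (q.1 : ℕ) + 1 ∧ p.2 = q.2 then 1 else 0

/-- `blkdiag T M`: block-diagonal matrix with `T+1` copies of `M` on the diagonal. -/
noncomputable def blkdiag (T : ℕ) {n m : ℕ} (M : Matrix (Fin n) (Fin m) ℝ) :
    Matrix (Fin (T+1) × Fin n) (Fin (T+1) × Fin m) ℝ :=
  fun p q => if p.1 = q.1 then M p.2 q.2 else 0

/-- A block-partitioned matrix is block lower triangular: all blocks strictly above the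
block diagonal are zero. -/
def BlockLT {T n m : ℕ} (M : Matrix (Fin (T+1) × Fin m) (Fin (T+1) × Fin n) ℝ) : Prop :=
  ∀ p q, p.1 < q.1 → M p q = 0


section Helpers

lemma l1norm_nonneg {ι : Type*} [Fintype ι] (v : ι → ℝ) : 0 ≤ l1norm v :=
  Finset.sum_nonneg fun _ _ => abs_nonneg _

lemma continuous_l1sub {ι : Type*} [Fintype ι] :
    Continuous fun p : (ι → ℝ) × (ι → ℝ) => l1norm (p.1 - p.2) := by
  unfold l1norm
  exact continuous_finset_sum _ fun i _ =>
    (((continuous_apply i).comp continuous_fst).sub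
      ((continuous_apply i).comp continuous_snd)).abs

lemma map_finset_sum_meas {α β ι : Type*} [MeasurableSpace α] [MeasurableSpace β]
    {f : α → β} (hf : Measurable f) (s : Finset ι) (μ : ι → Measure α) :
    (∑ i ∈ s, μ i).map f = ∑ i ∈ s, (μ i).map f := by
  classical
  induction s using Finset.induction with
  | empty => simp [Measure.map_zero]
  | insert _ _ h ih => simp [Finset.sum_insert h, Measure.map_add _ _ hf, ih]

lemma integrable_dirac'' {α : Type*} [MeasurableSpace α] [TopologicalSpace α]
    [OpensMeasurableSpace α] {f : α → ℝ}
    (hf : Continuous f) (c : α) : Integrable f (Measure.dirac c) := by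
  refine ⟨hf.aestronglyMeasurable, ?_⟩
  rw [HasFiniteIntegral, lintegral_dirac' c]
  · exact ENNReal.coe_lt_top
  · exact measurable_coe_nnreal_ennreal.comp hf.measurable.nnnorm

lemma wass_emp_le {ι : Type*} [Fintype ι] {N : ℕ} (hN : 0 < N)
    (a b : Fin N → (ι → ℝ)) :
    wass (emp a) (emp b) ≤ (N : ℝ)⁻¹ * ∑ i, l1norm (a i - b i) := by
  have hNe : (N : ℝ≥0∞) ≠ 0 := Nat.cast_ne_zero.2 hN.ne'
  set f : ((ι → ℝ) × (ι → ℝ)) → ℝ := fun p => l1norm (p.1 - p.2) with hfdef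
  have hf : Continuous f := continuous_l1sub
  set π : Measure ((ι → ℝ) × (ι → ℝ)) :=
    (N : ℝ≥0∞)⁻¹ • ∑ i, Measure.dirac (a i, b i) with hπ
  have hmem : ((N : ℝ)⁻¹ * ∑ i, l1norm (a i - b i)) ∈
      { r | ∃ π : Measure ((ι → ℝ) × (ι → ℝ)),
        IsProbabilityMeasure π ∧ π.map Prod.fst = emp a ∧ π.map Prod.snd = emp b ∧
        r = ∫ p, l1norm (p.1 - p.2) ∂π } := by
    refine ⟨π, ?_, ?_, ?_, ?_⟩
    · constructor
      rw [hπ, Measure.smul_apply, Measure.finset_sum_apply]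
      simp [ENNReal.inv_mul_cancel hNe (ENNReal.natCast_ne_top N)]
    · rw [hπ, Measure.map_smul, map_finset_sum_meas measurable_fst]
      simp only [Measure.map_dirac' measurable_fst]
      rfl
    · rw [hπ, Measure.map_smul, map_finset_sum_meas measurable_snd]
      simp only [Measure.map_dirac' measurable_snd]
      rfl
    · rw [hπ, integral_smul_measure,
        integral_finset_sum_measure (fun i _ => integrable_dirac'' hf _)]
      simp only [integral_dirac' _ _ hf.stronglyMeasurable]
      simp [ENNReal.toReal_inv, smul_eq_mul]
      exact Or.inl rfl
  refine csInf_le ⟨0, fun r hr => ?_⟩ hmem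
  obtain ⟨ρ, _, _, _, rfl⟩ := hr
  exact integral_nonneg fun p => l1norm_nonneg _

lemma blkdiag_sub (T : ℕ) {n m : ℕ} (P Q : Matrix (Fin n) (Fin m) ℝ) :
    blkdiag T (P - Q) = blkdiag T P - blkdiag T Q := by
  ext p q
  simp only [blkdiag, Matrix.sub_apply]
  split <;> simp

lemma nilpotent_of_sblt {T n : ℕ} (S : Matrix (Fin (T+1) × Fin n) (Fin (T+1) × Fin n) ℝ)
    (h : ∀ p q, (p.1 : ℕ) ≤ (q.1 : ℕ) → S p q = 0) : S ^ (T+1) = 0 := by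
  have key : ∀ k : ℕ, ∀ p q, (p.1 : ℕ) < (q.1 : ℕ) + k → (S ^ k) p q = 0 := by
    intro k
    induction k with
    | zero =>
      intro p q hpq
      rw [pow_zero]
      exact Matrix.one_apply_ne (by
        intro he; rw [he] at hpq; omega)
    | succ k ih =>
      intro p q hpq
      rw [pow_succ, Matrix.mul_apply]
      refine Finset.sum_eq_zero fun r _ => ?_
      by_cases hr : (q.1 : ℕ) < (r.1 : ℕ)
      · rw [ih p r (by omega), zero_mul]
      · rw [h r q (by omega), mul_zero]
  ext p q
  have := key (T+1) p q (by have := p.1.isLt; omega)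
  simpa using this

lemma mul_pow_conjM {p q : Type*} [Fintype p] [Fintype q] [DecidableEq p] [DecidableEq q]
    (A : Matrix p q ℝ) (B : Matrix q p ℝ) (k : ℕ) :
    (A * B) ^ (k+1) = A * (B * A) ^ k * B := by
  induction k with
  | zero => simp
  | succ k ih =>
    rw [pow_succ, ih, pow_succ]
    simp only [Matrix.mul_assoc]

lemma sblt_DPhi {T n m : ℕ} (ΔA : Matrix (Fin n) (Fin n) ℝ) (ΔB : Matrix (Fin n) (Fin m) ℝ)
    (Φx : Matrix (Fin (T+1) × Fin n) (Fin (T+1) × Fin n) ℝ)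
    (Φu : Matrix (Fin (T+1) × Fin m) (Fin (T+1) × Fin n) ℝ)
    (hx : BlockLT Φx) (hu : BlockLT Φu) :
    ∀ p q, (p.1 : ℕ) ≤ (q.1 : ℕ) →
      (dshift T n * Matrix.fromCols (blkdiag T ΔA) (blkdiag T ΔB)
        * Matrix.fromRows Φx Φu) p q = 0 := by
  intro p q hpq
  rw [Matrix.mul_apply]
  refine Finset.sum_eq_zero fun s _ => ?_
  have inner : ∀ (k : ℕ) (M : Matrix (Fin n) (Fin k) ℝ) (t : Fin (T+1) × Fin k),
      (q.1 : ℕ) ≤ (t.1 : ℕ) →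
      (∑ r, dshift T n p r * blkdiag T M r t) = 0 := by
    intro k M t ht
    refine Finset.sum_eq_zero fun r _ => ?_
    by_cases hr : r.1 = t.1
    · have : ¬ ((p.1 : ℕ) = (r.1 : ℕ) + 1 ∧ p.2 = r.2) := by
        rintro ⟨h1, -⟩
        have : (r.1 : ℕ) = (t.1 : ℕ) := by rw [hr]
        omega
      simp [dshift, this]
    · simp [blkdiag, hr]
  cases s with
  | inl t =>
    by_cases ht : t.1 < q.1
    · rw [Matrix.fromRows_apply_inl, hx t q ht, mul_zero]
    · have ht' : (q.1 : ℕ) ≤ (t.1 : ℕ) := by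
        have := Fin.lt_def.not.mp ht; omega
      rw [Matrix.mul_apply]
      simp only [Matrix.fromCols_apply_inl]
      rw [inner n ΔA t ht', zero_mul]
  | inr t =>
    by_cases ht : t.1 < q.1
    · rw [Matrix.fromRows_apply_inr, hu t q ht, mul_zero]
    · have ht' : (q.1 : ℕ) ≤ (t.1 : ℕ) := by
        have := Fin.lt_def.not.mp ht; omega
      rw [Matrix.mul_apply]
      simp only [Matrix.fromCols_apply_inr]
      rw [inner m ΔB t ht', zero_mul]

end Helpers

/-- **Model-mismatch bound with arbitrary initial conditions.**
(a) `Φ(ŵⁱ + x̃₀ⁱ) − R_Φ Φ (wⁱ + x̃₀ⁱ) = R_Φ Φ Z Δℳ (Φ(ŵⁱ + x̃₀ⁱ) − [xⁱ; uⁱ])`; and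
(b) the Wasserstein distance between the empirical predictive and empirical closed-loop
distributions is bounded by the average ℓ¹-norm of these mismatch terms. -/
theorem stmt19 {n m T N : ℕ} (hn : 0 < n) (hm : 0 < m) (hT : 0 < T) (hN : 0 < N)
    (Ahat A : Matrix (Fin n) (Fin n) ℝ) (Bhat B : Matrix (Fin n) (Fin m) ℝ)
    (Φx : Matrix (Fin (T+1) × Fin n) (Fin (T+1) × Fin n) ℝ)
    (Φu : Matrix (Fin (T+1) × Fin m) (Fin (T+1) × Fin n) ℝ)
    (hx : BlockLT Φx) (hu : BlockLT Φu)
    (hSLS : (1 - dshift T n * blkdiag T Ahat) * Φx - dshift T n * blkdiag T Bhat * Φu = 1)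
    (Φ : Matrix ((Fin (T+1) × Fin n) ⊕ (Fin (T+1) × Fin m)) (Fin (T+1) × Fin n) ℝ)
    (hΦ : Φ = Matrix.fromRows Φx Φu)
    (ΔM : Matrix (Fin (T+1) × Fin n) ((Fin (T+1) × Fin n) ⊕ (Fin (T+1) × Fin m)) ℝ)
    (hΔM : ΔM = Matrix.fromCols (blkdiag T (Ahat - A)) (blkdiag T (Bhat - B)))
    (RΦ : Matrix ((Fin (T+1) × Fin n) ⊕ (Fin (T+1) × Fin m))
                 ((Fin (T+1) × Fin n) ⊕ (Fin (T+1) × Fin m)) ℝ)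
    (hR : RΦ = (1 + Φ * dshift T n * ΔM)⁻¹)
    (x0 : Fin n → ℝ)
    (x : Fin N → (Fin (T+1) × Fin n) → ℝ) (u : Fin N → (Fin (T+1) × Fin m) → ℝ)
    (w what : Fin N → (Fin (T+1) × Fin n) → ℝ)
    (hw : ∀ i, w i = x i - (dshift T n * blkdiag T A) *ᵥ x i
        - (dshift T n * blkdiag T B) *ᵥ u i)
    (hwhat : ∀ i, what i = x i - (dshift T n * blkdiag T Ahat) *ᵥ x i
        - (dshift T n * blkdiag T Bhat) *ᵥ u i)
    (xt : Fin N → (Fin (T+1) × Fin n) → ℝ)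
    (hxt : ∀ i p, xt i p = if p.1 = 0 then x0 p.2 - x i (0, p.2) else 0) :
    (∀ i, Φ *ᵥ (what i + xt i) - (RΦ * Φ) *ᵥ (w i + xt i)
        = (RΦ * Φ * dshift T n * ΔM) *ᵥ (Φ *ᵥ (what i + xt i) - Sum.elim (x i) (u i))) ∧
    wass (emp (fun i => Φ *ᵥ (what i + xt i)))
        (emp (fun i => (RΦ * Φ) *ᵥ (w i + xt i)))
      ≤ (N : ℝ)⁻¹ * ∑ i, l1norm
          ((RΦ * Φ * dshift T n * ΔM) *ᵥ (Φ *ᵥ (what i + xt i) - Sum.elim (x i) (u i))) := by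
  subst hΦ hΔM hR
  set Zm := dshift T n with hZm
  set ΔM := Matrix.fromCols (blkdiag T (Ahat - A)) (blkdiag T (Bhat - B)) with hΔM
  set Φ := Matrix.fromRows Φx Φu with hΦ
  set M' := Φ * Zm * ΔM with hM'
  have hSpow : (Zm * ΔM * Φ) ^ (T+1) = 0 :=
    nilpotent_of_sblt _ (sblt_DPhi (Ahat - A) (Bhat - B) Φx Φu hx hu)
  have hnil : IsNilpotent M' := ⟨T+2, by
    rw [hM', Matrix.mul_assoc Φ Zm ΔM, mul_pow_conjM, hSpow, Matrix.mul_zero, Matrix.zero_mul]⟩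
  have hdet : IsUnit (1 + M').det :=
    (Matrix.isUnit_iff_isUnit_det _).mp hnil.isUnit_one_add
  set R := (1 + M')⁻¹ with hRdef
  have hRinv : R * (1 + M') = 1 := Matrix.nonsing_inv_mul _ hdet
  have hRM : R * M' = 1 - R := by
    have h1 : R + R * M' = 1 := by rw [← mul_one R, mul_assoc, one_mul, ← mul_add, hRinv]
    linear_combination (norm := noncomm_ring) h1
  have hRMeq : R * Φ * Zm * ΔM = R * M' := by
    rw [hM']; simp only [Matrix.mul_assoc]
  have key : ∀ i, Φ *ᵥ (what i + xt i) - (R * Φ) *ᵥ (w i + xt i)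
      = (R * Φ * Zm * ΔM) *ᵥ (Φ *ᵥ (what i + xt i) - Sum.elim (x i) (u i)) := by
    intro i
    have hwi : w i + xt i = (what i + xt i) + Zm *ᵥ (ΔM *ᵥ Sum.elim (x i) (u i)) := by
      rw [hw i, hwhat i, hΔM, Matrix.fromCols_mulVec_sumElim, blkdiag_sub, blkdiag_sub]
      simp only [Matrix.mulVec_add, Matrix.sub_mulVec, Matrix.mulVec_sub,
        ← Matrix.mulVec_mulVec]
      abel
    have e3 : (R * Φ) *ᵥ (Zm *ᵥ (ΔM *ᵥ Sum.elim (x i) (u i)))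
        = (1 - R) *ᵥ Sum.elim (x i) (u i) := by
      simp only [Matrix.mulVec_mulVec, ← Matrix.mul_assoc]
      rw [hRMeq, hRM]
    have e4 : (R * Φ) *ᵥ (what i + xt i) = R *ᵥ (Φ *ᵥ (what i + xt i)) :=
      (Matrix.mulVec_mulVec _ _ _).symm
    rw [hRMeq, hRM, hwi, Matrix.mulVec_add (R * Φ), e3, e4]
    simp only [Matrix.sub_mulVec, Matrix.one_mulVec, Matrix.mulVec_sub, Matrix.mulVec_add]
    abel
  refine ⟨key, ?_⟩
  refine le_trans (wass_emp_le hN _ _) (le_of_eq ?_)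
  congr 1
  exact Finset.sum_congr rfl fun i _ => by rw [key i]
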